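/- Suppose in addition α ∈ [1,2). For every x > 1, the function ε ↦ ε^{αρ̂−1}·[ (x/(1+ε)+1)^{αρ}·(x/(1+ε)−1)^{αρ̂}·∫_{1/(1+ε)}^1 (1+s)^{−αρ}(1−s)^{−αρ̂}·(x/(1+ε) − s)^{−1} ds − (α−1)·(∫₁^{x/(1+ε)} ψ_{αρ}(u) du)·∫_{1/(1+ε)}^1 (1+s)^{−αρ}(1−s)^{−αρ̂} ds ] tends to (2^{−αρ}/(1−αρ̂))·[ (x+1)·ψ_{αρ}(x) − (α−1)·∫₁^x ψ_{αρ}(u) du ] as ε → 0 from the right. -/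

import Mathlib

open Real MeasureTheory Set Filter intervalIntegral
open scoped Topology

/-- `ψ_{αρ}(u) = (u−1)^{αρ̂−1}(u+1)^{αρ−1}` where `ρ̂ = 1 − ρ`. -/
noncomputable def psiRho (α ρ : ℝ) (u : ℝ) : ℝ :=
  (u - 1) ^ (α * (1 - ρ) - 1) * (u + 1) ^ (α * ρ - 1)

/-- `ψ_{αρ̂}(u) = (u−1)^{αρ−1}(u+1)^{αρ̂−1}` where `ρ̂ = 1 − ρ`. -/
noncomputable def psiRhoHat (α ρ : ℝ) (u : ℝ) : ℝ :=
  (u - 1) ^ (α * ρ - 1) * (u + 1) ^ (α * (1 - ρ) - 1)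

/-- `g(y) = (y−1)^{αρ}(y+1)^{αρ̂−1}`. -/
noncomputable def gfun (α ρ : ℝ) (y : ℝ) : ℝ :=
  (y - 1) ^ (α * ρ) * (y + 1) ^ (α * (1 - ρ) - 1)

/-- `z(x,y) = |xy−1|/|x−y|`. -/
noncomputable def zfun (x y : ℝ) : ℝ := |x * y - 1| / |x - y|

/-- `c_{αρ} = 2^{αρ}·π·αρ·Γ(αρ)/Γ(1−αρ̂)`. -/
noncomputable def cRho (α ρ : ℝ) : ℝ :=
  2 ^ (α * ρ) * π * (α * ρ) * Real.Gamma (α * ρ) / Real.Gamma (1 - α * (1 - ρ))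

/-- The harmonic function `v₁` (defined piecewise for `x > 1` and `x < −1`). -/
noncomputable def v1fun (α ρ : ℝ) (x : ℝ) : ℝ :=
  if 1 < x then
    Real.sin (π * (α * (1 - ρ))) *
      ((x + 1) * psiRho α ρ x - max (α - 1) 0 * ∫ u in (1:ℝ)..x, psiRho α ρ u)
  else
    Real.sin (π * (α * ρ)) *
      ((|x| - 1) * psiRhoHat α ρ |x| - max (α - 1) 0 * ∫ u in (1:ℝ)..|x|, psiRhoHat α ρ u)

/-- The explicit Profeta–Simon Green function `U(x,y)` (for `x > y > 1` resp. `x < −1 < 1 < y`). -/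
noncomputable def Ufun (α ρ : ℝ) (x y : ℝ) : ℝ :=
  if 1 < x then
    (2 ^ (1 - α) / (Real.Gamma (α * ρ) * Real.Gamma (α * (1 - ρ)))) *
      ((x - y) ^ (α - 1) * (∫ u in (1:ℝ)..zfun x y, psiRhoHat α ρ u)
        - max (α - 1) 0 * (∫ u in (1:ℝ)..y, psiRhoHat α ρ u) * ∫ u in (1:ℝ)..x, psiRho α ρ u)
  else
    (Real.sin (π * (α * ρ)) / Real.sin (π * (α * (1 - ρ)))) *
    (2 ^ (1 - α) / (Real.Gamma (α * ρ) * Real.Gamma (α * (1 - ρ)))) *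
      ((y - x) ^ (α - 1) * (∫ u in (1:ℝ)..zfun x y, psiRhoHat α ρ u)
        - max (α - 1) 0 * (∫ u in (1:ℝ)..y, psiRhoHat α ρ u) * ∫ u in (1:ℝ)..|x|, psiRhoHat α ρ u)


private lemma aux_rpow_integrable {β : ℝ} (hβ1 : β < 1) (a : ℝ) :
    IntervalIntegrable (fun s => (1 - s) ^ (-β)) volume a 1 := by
  have h := (intervalIntegrable_rpow' (a := 1 - a) (b := 1 - 1)
    (show (-1:ℝ) < -β by linarith)).comp_sub_left 1
  simpa using h

private lemma aux_rpow_integral {β : ℝ} (hβ0 : 0 < β) (hβ1 : β < 1) (a : ℝ) :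
    (∫ s in a..(1:ℝ), (1 - s) ^ (-β)) = (1 - a) ^ (1 - β) / (1 - β) := by
  have h1 : (∫ s in a..(1:ℝ), (1 - s) ^ (-β))
      = ∫ s in ((1:ℝ) - 1)..((1:ℝ) - a), s ^ (-β) :=
    intervalIntegral.integral_comp_sub_left (fun s => s ^ (-β)) 1
  rw [h1]
  rw [integral_rpow (Or.inl (by linarith : (-1:ℝ) < -β))]
  have h0 : ((1:ℝ) - 1) ^ (-β + 1) = 0 := by
    simp [Real.zero_rpow (show -β + 1 ≠ 0 by linarith)]
  rw [h0]
  rw [show -β + 1 = 1 - β by ring]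
  ring

private lemma key_squeeze {β : ℝ} (hβ0 : 0 < β) (hβ1 : β < 1)
    (h : ℝ → ℝ → ℝ) (m M : ℝ → ℝ) (L : ℝ)
    (hcont : ∀ᶠ ε in 𝓝[>] (0:ℝ), ContinuousOn (h ε) (Icc (1 / (1 + ε)) 1))
    (hbnd : ∀ᶠ ε in 𝓝[>] (0:ℝ), ∀ s ∈ Icc (1 / (1 + ε)) 1, m ε ≤ h ε s ∧ h ε s ≤ M ε)
    (hm : Tendsto m (𝓝[>] (0:ℝ)) (𝓝 L)) (hM : Tendsto M (𝓝[>] (0:ℝ)) (𝓝 L)) :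
    Tendsto (fun ε => ε ^ (β - 1) * ∫ s in (1 / (1 + ε))..(1:ℝ), (1 - s) ^ (-β) * h ε s)
      (𝓝[>] (0:ℝ)) (𝓝 (L / (1 - β))) := by
  have hpow1 : Tendsto (fun ε : ℝ => (1 + ε) ^ (β - 1)) (𝓝[>] (0:ℝ)) (𝓝 1) := by
    have hc : ContinuousAt (fun ε : ℝ => (1 + ε) ^ (β - 1)) 0 :=
      (continuousAt_const.add continuousAt_id).rpow_const (Or.inl (by norm_num))
    have := hc.tendsto.mono_left (nhdsWithin_le_nhds (s := Ioi (0:ℝ)))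
    simpa using this
  have hlow : Tendsto (fun ε => m ε * ((1 + ε) ^ (β - 1) / (1 - β))) (𝓝[>] (0:ℝ))
      (𝓝 (L / (1 - β))) := by
    have := hm.mul (hpow1.div_const (1 - β))
    simpa [mul_one_div, mul_div_assoc, div_eq_mul_inv] using this
  have hhigh : Tendsto (fun ε => M ε * ((1 + ε) ^ (β - 1) / (1 - β))) (𝓝[>] (0:ℝ))
      (𝓝 (L / (1 - β))) := by
    have := hM.mul (hpow1.div_const (1 - β))
    simpa [mul_one_div, mul_div_assoc, div_eq_mul_inv] using this
  refine tendsto_of_tendsto_of_tendsto_of_le_of_le' hlow hhigh ?_ ?_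
  · filter_upwards [hcont, hbnd, self_mem_nhdsWithin] with ε hc hb hε
    have hε0 : (0:ℝ) < ε := hε
    have h1ε : (0:ℝ) < 1 + ε := by linarith
    set a := 1 / (1 + ε) with ha
    have ha0 : 0 < a := by positivity
    have ha1 : a ≤ 1 := by
      rw [ha, div_le_one h1ε]; linarith
    have hint0 : IntervalIntegrable (fun s => (1 - s) ^ (-β)) volume a 1 :=
      aux_rpow_integrable hβ1 a
    have hint1 : IntervalIntegrable (fun s => (1 - s) ^ (-β) * h ε s) volume a 1 :=
      hint0.mul_continuousOn (by rwa [uIcc_of_le ha1])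
    have hmono : (∫ s in a..1, (1 - s) ^ (-β) * m ε)
        ≤ ∫ s in a..1, (1 - s) ^ (-β) * h ε s := by
      refine intervalIntegral.integral_mono_on ha1 (hint0.mul_const _) hint1 ?_
      intro s hs
      exact mul_le_mul_of_nonneg_left (hb s hs).1
        (Real.rpow_nonneg (by linarith [hs.2]) _)
    have hεp : (0:ℝ) ≤ ε ^ (β - 1) := Real.rpow_nonneg hε0.le _
    have key : ε ^ (β - 1) * (∫ s in a..1, (1 - s) ^ (-β) * m ε)
        = m ε * ((1 + ε) ^ (β - 1) / (1 - β)) := by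
      rw [intervalIntegral.integral_mul_const, aux_rpow_integral hβ0 hβ1 a]
      have ha' : (1:ℝ) - a = ε / (1 + ε) := by
        rw [ha]; field_simp; ring
      have hpow : ε ^ (β - 1) * ((1 - a) ^ (1 - β)) = (1 + ε) ^ (β - 1) := by
        rw [ha', Real.div_rpow hε0.le h1ε.le, ← mul_div_assoc, ← Real.rpow_add hε0,
          show β - 1 + (1 - β) = 0 by ring, Real.rpow_zero, one_div,
          ← Real.rpow_neg h1ε.le, neg_sub]
      calc ε ^ (β - 1) * ((1 - a) ^ (1 - β) / (1 - β) * m ε)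
          = ε ^ (β - 1) * (1 - a) ^ (1 - β) * m ε / (1 - β) := by ring
        _ = m ε * ((1 + ε) ^ (β - 1) / (1 - β)) := by rw [hpow]; ring
    rw [← key]
    exact mul_le_mul_of_nonneg_left hmono hεp
  · filter_upwards [hcont, hbnd, self_mem_nhdsWithin] with ε hc hb hε
    have hε0 : (0:ℝ) < ε := hε
    have h1ε : (0:ℝ) < 1 + ε := by linarith
    set a := 1 / (1 + ε) with ha
    have ha0 : 0 < a := by positivity
    have ha1 : a ≤ 1 := by
      rw [ha, div_le_one h1ε]; linarith
    have hint0 : IntervalIntegrable (fun s => (1 - s) ^ (-β)) volume a 1 :=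
      aux_rpow_integrable hβ1 a
    have hint1 : IntervalIntegrable (fun s => (1 - s) ^ (-β) * h ε s) volume a 1 :=
      hint0.mul_continuousOn (by rwa [uIcc_of_le ha1])
    have hmono : (∫ s in a..1, (1 - s) ^ (-β) * h ε s)
        ≤ ∫ s in a..1, (1 - s) ^ (-β) * M ε := by
      refine intervalIntegral.integral_mono_on ha1 hint1 (hint0.mul_const _) ?_
      intro s hs
      exact mul_le_mul_of_nonneg_left (hb s hs).2
        (Real.rpow_nonneg (by linarith [hs.2]) _)
    have hεp : (0:ℝ) ≤ ε ^ (β - 1) := Real.rpow_nonneg hε0.le _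
    have key : ε ^ (β - 1) * (∫ s in a..1, (1 - s) ^ (-β) * M ε)
        = M ε * ((1 + ε) ^ (β - 1) / (1 - β)) := by
      rw [intervalIntegral.integral_mul_const, aux_rpow_integral hβ0 hβ1 a]
      have ha' : (1:ℝ) - a = ε / (1 + ε) := by
        rw [ha]; field_simp; ring
      have hpow : ε ^ (β - 1) * ((1 - a) ^ (1 - β)) = (1 + ε) ^ (β - 1) := by
        rw [ha', Real.div_rpow hε0.le h1ε.le, ← mul_div_assoc, ← Real.rpow_add hε0,
          show β - 1 + (1 - β) = 0 by ring, Real.rpow_zero, one_div,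
          ← Real.rpow_neg h1ε.le, neg_sub]
      calc ε ^ (β - 1) * ((1 - a) ^ (1 - β) / (1 - β) * M ε)
          = ε ^ (β - 1) * (1 - a) ^ (1 - β) * M ε / (1 - β) := by ring
        _ = M ε * ((1 + ε) ^ (β - 1) / (1 - β)) := by rw [hpow]; ring
    rw [← key]
    exact mul_le_mul_of_nonneg_left hmono hεp

/-- Proposition 3.6 (analytic content, `α ∈ [1,2)`): for `x > 1`, as `ε → 0⁺`,
`ε^{αρ̂−1}·[ (x/(1+ε)+1)^{αρ}(x/(1+ε)−1)^{αρ̂}·∫_{1/(1+ε)}^1 (1+s)^{−αρ}(1−s)^{−αρ̂}(x/(1+ε)−s)^{−1} ds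
  − (α−1)·(∫₁^{x/(1+ε)} ψ_{αρ}) · ∫_{1/(1+ε)}^1 (1+s)^{−αρ}(1−s)^{−αρ̂} ds ]
  → (2^{−αρ}/(1−αρ̂))·[ (x+1)ψ_{αρ}(x) − (α−1)∫₁^x ψ_{αρ} ]`. -/
theorem stmt_16 (α ρ : ℝ) (hα1 : 1 ≤ α) (hα2 : α < 2) (hρ0 : 0 < ρ) (hρ1 : ρ < 1)
    (hαρ : α * ρ < 1) (hαρh : α * (1 - ρ) < 1)
    (x : ℝ) (hx : 1 < x) :
    Tendsto (fun ε : ℝ =>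
        ε ^ (α * (1 - ρ) - 1) *
          ((x / (1 + ε) + 1) ^ (α * ρ) * (x / (1 + ε) - 1) ^ (α * (1 - ρ)) *
              (∫ s in (1 / (1 + ε))..(1:ℝ),
                (1 + s) ^ (-(α * ρ)) * (1 - s) ^ (-(α * (1 - ρ))) * (x / (1 + ε) - s)⁻¹)
            - (α - 1) * (∫ u in (1:ℝ)..(x / (1 + ε)), psiRho α ρ u) *
                ∫ s in (1 / (1 + ε))..(1:ℝ),
                  (1 + s) ^ (-(α * ρ)) * (1 - s) ^ (-(α * (1 - ρ)))))
      (𝓝[>] (0:ℝ))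
      (𝓝 ((2 ^ (-(α * ρ)) / (1 - α * (1 - ρ))) *
        ((x + 1) * psiRho α ρ x - (α - 1) * ∫ u in (1:ℝ)..x, psiRho α ρ u))) := by

  set γ := α * ρ with hγdef
  set β := α * (1 - ρ) with hβdef
  have hγ0 : 0 < γ := by positivity
  have hβ0 : 0 < β := by have : 0 < 1 - ρ := by linarith
                         positivity
  have hβ1 : β < 1 := hαρh
  have hγ1 : γ < 1 := hαρ
  -- basic tendsto facts
  have hxc : Tendsto (fun ε : ℝ => x / (1 + ε)) (𝓝[>] (0:ℝ)) (𝓝 x) := by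
    have hc : ContinuousAt (fun ε : ℝ => x / (1 + ε)) 0 :=
      continuousAt_const.div (continuousAt_const.add continuousAt_id) (by norm_num)
    have := hc.tendsto.mono_left (nhdsWithin_le_nhds (s := Ioi (0:ℝ)))
    simpa using this
  have hac : Tendsto (fun ε : ℝ => 1 / (1 + ε)) (𝓝[>] (0:ℝ)) (𝓝 1) := by
    have hc : ContinuousAt (fun ε : ℝ => 1 / (1 + ε)) 0 :=
      continuousAt_const.div (continuousAt_const.add continuousAt_id) (by norm_num)
    have := hc.tendsto.mono_left (nhdsWithin_le_nhds (s := Ioi (0:ℝ)))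
    simpa using this
  -- the C factor
  have hC : Tendsto (fun ε : ℝ => (x / (1 + ε) + 1) ^ γ * (x / (1 + ε) - 1) ^ β)
      (𝓝[>] (0:ℝ)) (𝓝 ((x + 1) ^ γ * (x - 1) ^ β)) :=
    ((hxc.add_const 1).rpow_const (Or.inl (by linarith))).mul
      ((hxc.sub_const 1).rpow_const (Or.inl (by linarith)))
  -- the J factor
  have hψint : IntervalIntegrable (psiRho α ρ) volume 1 (x + 1) := by
    have h1 : IntervalIntegrable (fun u : ℝ => (u - 1) ^ (β - 1)) volume 1 (x + 1) := by
      have h := (intervalIntegrable_rpow' (a := (0:ℝ)) (b := x)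
        (show (-1:ℝ) < β - 1 by linarith)).comp_sub_right 1
      simpa using h
    have h2 : ContinuousOn (fun u : ℝ => (u + 1) ^ (γ - 1)) (uIcc 1 (x + 1)) := by
      apply ContinuousOn.rpow_const (by fun_prop)
      intro u hu
      rw [uIcc_of_le (by linarith)] at hu
      exact Or.inl (by nlinarith [hu.1])
    have := h1.mul_continuousOn h2
    exact (by simpa [hβdef, hγdef] using this : IntervalIntegrable (fun u : ℝ => (u - 1) ^ (α * (1 - ρ) - 1) * (u + 1) ^ (α * ρ - 1)) volume 1 (x + 1))
  have hprimCA : ContinuousAt (fun y => ∫ u in (1:ℝ)..y, psiRho α ρ u) x := by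
    have hcon : ContinuousOn (fun y => ∫ u in (1:ℝ)..y, psiRho α ρ u) (uIcc 1 (x + 1)) :=
      continuousOn_primitive_interval' hψint left_mem_uIcc
    refine hcon.continuousAt ?_
    rw [uIcc_of_le (by linarith)]
    exact Icc_mem_nhds hx (by linarith)
  have hJ : Tendsto (fun ε : ℝ => ∫ u in (1:ℝ)..(x / (1 + ε)), psiRho α ρ u)
      (𝓝[>] (0:ℝ)) (𝓝 (∫ u in (1:ℝ)..x, psiRho α ρ u)) := hprimCA.tendsto.comp hxc
  -- the Q factor via squeeze
  have hQ : Tendsto (fun ε : ℝ =>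
        ε ^ (β - 1) * ∫ s in (1 / (1 + ε))..(1:ℝ), (1 - s) ^ (-β) * (1 + s) ^ (-γ))
      (𝓝[>] (0:ℝ)) (𝓝 ((2:ℝ) ^ (-γ) / (1 - β))) := by
    refine key_squeeze hβ0 hβ1 (fun ε s => (1 + s) ^ (-γ)) (fun _ => (2:ℝ) ^ (-γ))
      (fun ε => (1 + 1 / (1 + ε)) ^ (-γ)) ((2:ℝ) ^ (-γ)) ?_ ?_ tendsto_const_nhds ?_
    · filter_upwards [self_mem_nhdsWithin] with ε hε
      have h1ε : (0:ℝ) < 1 + ε := by have : (0:ℝ) < ε := hε; linarith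
      apply ContinuousOn.rpow_const (by fun_prop)
      intro s hs
      have ha0 : 0 < 1 / (1 + ε) := by positivity
      exact Or.inl (by nlinarith [hs.1])
    · filter_upwards [self_mem_nhdsWithin] with ε hε
      have h1ε : (0:ℝ) < 1 + ε := by have : (0:ℝ) < ε := hε; linarith
      have ha0 : 0 < 1 / (1 + ε) := by positivity
      intro s hs
      constructor
      · exact Real.rpow_le_rpow_of_nonpos (by nlinarith [hs.1]) (by linarith [hs.2])
          (by linarith)
      · exact Real.rpow_le_rpow_of_nonpos (by linarith) (by linarith [hs.1]) (by linarith)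
    · have hc : ContinuousAt (fun ε : ℝ => (1 + 1 / (1 + ε)) ^ (-γ)) 0 := by
        refine ContinuousAt.rpow_const ?_ (Or.inl (by norm_num))
        exact continuousAt_const.add
          (continuousAt_const.div (continuousAt_const.add continuousAt_id) (by norm_num))
      have := hc.tendsto.mono_left (nhdsWithin_le_nhds (s := Ioi (0:ℝ)))
      norm_num at this
      convert this using 2
      norm_num
  -- the P factor via squeeze
  have hP : Tendsto (fun ε : ℝ =>
        ε ^ (β - 1) * ∫ s in (1 / (1 + ε))..(1:ℝ),
          (1 - s) ^ (-β) * ((1 + s) ^ (-γ) * (x / (1 + ε) - s)⁻¹))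
      (𝓝[>] (0:ℝ)) (𝓝 ((2:ℝ) ^ (-γ) * (x - 1)⁻¹ / (1 - β))) := by
    have hmemIoo : Ioo (0:ℝ) (x - 1) ∈ 𝓝[>] (0:ℝ) :=
      Ioo_mem_nhdsGT_of_mem ⟨le_refl 0, by linarith⟩
    refine key_squeeze hβ0 hβ1 (fun ε s => (1 + s) ^ (-γ) * (x / (1 + ε) - s)⁻¹)
      (fun ε => (2:ℝ) ^ (-γ) * ((x - 1) / (1 + ε))⁻¹)
      (fun ε => (1 + 1 / (1 + ε)) ^ (-γ) * (x / (1 + ε) - 1)⁻¹)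
      ((2:ℝ) ^ (-γ) * (x - 1)⁻¹) ?_ ?_ ?_ ?_
    · filter_upwards [hmemIoo] with ε hε
      obtain ⟨hε0, hεx⟩ := hε
      have h1ε : (0:ℝ) < 1 + ε := by linarith
      have hc1 : (1:ℝ) < x / (1 + ε) := by
        rw [lt_div_iff₀ h1ε]; linarith
      have ha0 : 0 < 1 / (1 + ε) := by positivity
      refine ContinuousOn.mul ?_ ?_
      · apply ContinuousOn.rpow_const (by fun_prop)
        intro s hs
        exact Or.inl (by nlinarith [hs.1])
      · apply ContinuousOn.inv₀ (by fun_prop)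
        intro s hs
        have := hs.2
        nlinarith [hs.2]
    · filter_upwards [hmemIoo] with ε hε
      obtain ⟨hε0, hεx⟩ := hε
      have h1ε : (0:ℝ) < 1 + ε := by linarith
      have hc1 : (1:ℝ) < x / (1 + ε) := by
        rw [lt_div_iff₀ h1ε]; linarith
      have ha0 : 0 < 1 / (1 + ε) := by positivity
      have hca : x / (1 + ε) - 1 / (1 + ε) = (x - 1) / (1 + ε) := by ring
      intro s hs
      have hs1 : 1 / (1 + ε) ≤ s := hs.1
      have hs2 : s ≤ 1 := hs.2
      have hcs : 0 < x / (1 + ε) - s := by linarith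
      constructor
      · apply mul_le_mul
        · exact Real.rpow_le_rpow_of_nonpos (by linarith) (by linarith) (by linarith)
        · rw [← hca]
          exact inv_anti₀ hcs (by linarith)
        · exact inv_nonneg.mpr (div_nonneg (by linarith) (by linarith))
        · exact Real.rpow_nonneg (by linarith) _
      · apply mul_le_mul
        · exact Real.rpow_le_rpow_of_nonpos (by nlinarith) (by linarith) (by linarith)
        · exact inv_anti₀ (by linarith) (by linarith)
        · exact inv_nonneg.mpr (by linarith)
        · exact Real.rpow_nonneg (by linarith) _
    · have hd : Tendsto (fun ε : ℝ => (x - 1) / (1 + ε)) (𝓝[>] (0:ℝ)) (𝓝 (x - 1)) := by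
        have hc : ContinuousAt (fun ε : ℝ => (x - 1) / (1 + ε)) 0 :=
          continuousAt_const.div (continuousAt_const.add continuousAt_id) (by norm_num)
        have := hc.tendsto.mono_left (nhdsWithin_le_nhds (s := Ioi (0:ℝ)))
        simpa using this
      exact tendsto_const_nhds.mul (hd.inv₀ (by intro h; nlinarith))
    · have h1 : Tendsto (fun ε : ℝ => (1 + 1 / (1 + ε)) ^ (-γ)) (𝓝[>] (0:ℝ))
          (𝓝 ((2:ℝ) ^ (-γ))) := by
        have hc : ContinuousAt (fun ε : ℝ => (1 + 1 / (1 + ε)) ^ (-γ)) 0 := by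
          refine ContinuousAt.rpow_const ?_ (Or.inl (by norm_num))
          exact continuousAt_const.add
            (continuousAt_const.div (continuousAt_const.add continuousAt_id) (by norm_num))
        have := hc.tendsto.mono_left (nhdsWithin_le_nhds (s := Ioi (0:ℝ)))
        norm_num at this
        convert this using 2
        norm_num
      have h2 : Tendsto (fun ε : ℝ => (x / (1 + ε) - 1)⁻¹) (𝓝[>] (0:ℝ)) (𝓝 (x - 1)⁻¹) :=
        ((hxc.sub_const 1).inv₀ (by intro h; nlinarith))
      exact h1.mul h2
  -- combine
  have hmain : Tendsto (fun ε : ℝ =>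
      ((x / (1 + ε) + 1) ^ γ * (x / (1 + ε) - 1) ^ β) *
        (ε ^ (β - 1) * ∫ s in (1 / (1 + ε))..(1:ℝ),
          (1 - s) ^ (-β) * ((1 + s) ^ (-γ) * (x / (1 + ε) - s)⁻¹))
      - (α - 1) * (∫ u in (1:ℝ)..(x / (1 + ε)), psiRho α ρ u) *
        (ε ^ (β - 1) * ∫ s in (1 / (1 + ε))..(1:ℝ), (1 - s) ^ (-β) * (1 + s) ^ (-γ)))
      (𝓝[>] (0:ℝ))
      (𝓝 (((x + 1) ^ γ * (x - 1) ^ β) * ((2:ℝ) ^ (-γ) * (x - 1)⁻¹ / (1 - β))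
        - (α - 1) * (∫ u in (1:ℝ)..x, psiRho α ρ u) * ((2:ℝ) ^ (-γ) / (1 - β)))) :=
    (hC.mul hP).sub (((tendsto_const_nhds.mul hJ)).mul hQ)
  have hval : ((x + 1) ^ γ * (x - 1) ^ β) * ((2:ℝ) ^ (-γ) * (x - 1)⁻¹ / (1 - β))
        - (α - 1) * (∫ u in (1:ℝ)..x, psiRho α ρ u) * ((2:ℝ) ^ (-γ) / (1 - β))
      = (2 ^ (-γ) / (1 - β)) *
        ((x + 1) * psiRho α ρ x - (α - 1) * ∫ u in (1:ℝ)..x, psiRho α ρ u) := by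
    have hx1 : (0:ℝ) < x - 1 := by linarith
    have hx2 : (0:ℝ) < x + 1 := by linarith
    have e1 : (x - 1) ^ (β - 1) = (x - 1) ^ β / (x - 1) := Real.rpow_sub_one hx1.ne' β
    have e2 : (x + 1) ^ (γ - 1) = (x + 1) ^ γ / (x + 1) := Real.rpow_sub_one hx2.ne' γ
    have e3 : (x + 1) * psiRho α ρ x = (x + 1) ^ γ * (x - 1) ^ β * (x - 1)⁻¹ := by
      rw [psiRho]
      rw [show α * (1 - ρ) - 1 = β - 1 by rw [hβdef], show α * ρ - 1 = γ - 1 by rw [hγdef]]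
      rw [e1, e2]
      field_simp
    rw [mul_sub, e3]
    ring
  rw [hval] at hmain
  refine hmain.congr' ?_
  filter_upwards [Ioo_mem_nhdsGT_of_mem (⟨le_refl 0, by linarith⟩ : (0:ℝ) ∈ Ico 0 (x - 1))]
    with ε hε
  obtain ⟨hε0, hεx⟩ := hε
  have hI1 : (∫ s in (1 / (1 + ε))..(1:ℝ),
        (1 + s) ^ (-γ) * (1 - s) ^ (-β) * (x / (1 + ε) - s)⁻¹)
      = ∫ s in (1 / (1 + ε))..(1:ℝ),
        (1 - s) ^ (-β) * ((1 + s) ^ (-γ) * (x / (1 + ε) - s)⁻¹) :=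
    intervalIntegral.integral_congr (fun s _ => by ring)
  have hI2 : (∫ s in (1 / (1 + ε))..(1:ℝ), (1 + s) ^ (-γ) * (1 - s) ^ (-β))
      = ∫ s in (1 / (1 + ε))..(1:ℝ), (1 - s) ^ (-β) * (1 + s) ^ (-γ) :=
    intervalIntegral.integral_congr (fun s _ => by ring)
  rw [hI1, hI2]
  ring
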